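/- Let Ω be a metric space and let 𝒫 be a nonempty set of Borel probability measures on Ω that is compact in the topology of weak convergence of measures; define the capacity c(A) = sup_{P∈𝒫} P(A). Let M > 0 and let X_n : Ω → ℝ (n ≥ 1) be Borel functions with |X_n(ω)| ≤ M for all n and ω, each X_n quasi-continuous (for every ε > 0 there is an open set G ⊆ Ω with c(G) < ε such that X_n restricted to Gᶜ is continuous), and suppose X_n(ω) decreases to X(ω) for every ω ∈ Ω. Then sup_{P∈𝒫} ∫ X_n dP decreases to sup_{P∈𝒫} ∫ X dP. -/

import Mathlib

open MeasureTheory Filter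
open scoped BoundedContinuousFunction

section Aux

variable {Ω : Type*} [MetricSpace Ω] [MeasurableSpace Ω] [BorelSpace Ω]

private lemma integrable_of_abs_le' {μ : Measure Ω} [IsProbabilityMeasure μ]
    {f : Ω → ℝ} {M : ℝ} (hf : Measurable f) (hb : ∀ ω, |f ω| ≤ M) : Integrable f μ :=
  ⟨hf.aestronglyMeasurable,
    HasFiniteIntegral.of_bounded (C := M) (ae_of_all _ fun ω => by
      simpa [Real.norm_eq_abs] using hb ω)⟩

private lemma abs_integral_le' {μ : Measure Ω} [IsProbabilityMeasure μ]
    {f : Ω → ℝ} {M : ℝ} (hb : ∀ ω, |f ω| ≤ M) : |∫ ω, f ω ∂μ| ≤ M := by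
  have := norm_integral_le_of_norm_le_const (μ := μ) (C := M) (f := f)
    (ae_of_all _ fun ω => by simpa [Real.norm_eq_abs] using hb ω)
  simpa [Real.norm_eq_abs, measure_univ] using this

/-- A bounded quasi-continuous function has a weakly continuous integral on `Ps`. -/
private lemma continuousOn_integral_of_qc
    (Ps : Set (ProbabilityMeasure Ω)) {M : ℝ} (hM : 0 < M) {f : Ω → ℝ}
    (hmeas : Measurable f) (hb : ∀ ω, |f ω| ≤ M)
    (hqc : ∀ ε : ℝ, 0 < ε → ∃ G : Set Ω, IsOpen G ∧
      (⨆ P ∈ Ps, (P : Measure Ω) G) < ENNReal.ofReal ε ∧ ContinuousOn f Gᶜ) :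
    ContinuousOn (fun P : ProbabilityMeasure Ω => ∫ ω, f ω ∂(P : Measure Ω)) Ps := by
  intro Q hQ
  rw [ContinuousWithinAt, Metric.tendsto_nhds]
  intro ε hε
  have hδ : 0 < ε / (8 * M) := by positivity
  obtain ⟨G, hGopen, hGcap, hGcont⟩ := hqc (ε / (8 * M)) hδ
  -- Tietze extension of `f` from `Gᶜ`
  have hclosed : IsClosed Gᶜ := hGopen.isClosed_compl
  set f₀ : ↥Gᶜ →ᵇ ℝ := BoundedContinuousFunction.ofNormedAddCommGroup
    (Gᶜ.restrict f) hGcont.restrict M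
    (fun x => by rw [Real.norm_eq_abs]; exact hb x) with hf₀
  obtain ⟨g, hgmem, hgf⟩ := BoundedContinuousFunction.exists_forall_mem_restrict_eq_of_closed
    f₀ hclosed (t := Set.Icc (-M) M)
    (fun x => by rw [Set.mem_Icc, ← abs_le]; exact hb x) ⟨M, by simp [hM.le, hM]⟩
  have hgeq : ∀ x ∈ Gᶜ, g x = f x := by
    intro x hx
    have := DFunLike.congr_fun hgf (⟨x, hx⟩ : ↥Gᶜ)
    exact this
  have hgb : ∀ x, |g x| ≤ M := fun x => abs_le.2 ⟨(hgmem x).1, (hgmem x).2⟩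
  -- the key uniform estimate on `Ps`
  have est : ∀ P ∈ Ps, |(∫ ω, f ω ∂(P : Measure Ω)) - ∫ ω, g ω ∂(P : Measure Ω)| ≤ ε / 4 := by
    intro P hP
    have hPG : ((P : Measure Ω) G).toReal ≤ ε / (8 * M) := by
      have h1 : (P : Measure Ω) G ≤ ENNReal.ofReal (ε / (8 * M)) :=
        le_of_lt (lt_of_le_of_lt (le_biSup (fun P : ProbabilityMeasure Ω =>
          (P : Measure Ω) G) hP) hGcap)
      exact ENNReal.toReal_le_of_le_ofReal hδ.le h1
    have hif : Integrable f (P : Measure Ω) := integrable_of_abs_le' hmeas hb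
    have hig : Integrable (fun ω => g ω) (P : Measure Ω) := g.integrable _
    rw [← integral_sub hif hig]
    have hzero : ∀ x, x ∉ G → f x - g x = 0 := fun x hx => by
      rw [hgeq x hx]; ring
    rw [← setIntegral_eq_integral_of_forall_compl_eq_zero (s := G) hzero]
    have hnorm : ‖∫ ω in G, (f ω - g ω) ∂(P : Measure Ω)‖ ≤
        (2 * M) * ((P : Measure Ω) G).toReal := by
      apply norm_setIntegral_le_of_norm_le_const (measure_lt_top _ _)
      intro x _
      have := abs_sub (f x) (g x)
      calc ‖f x - g x‖ = |f x - g x| := rfl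
        _ ≤ |f x| + |g x| := abs_sub _ _
        _ ≤ M + M := add_le_add (hb x) (hgb x)
        _ = 2 * M := by ring
    calc |∫ ω in G, (f ω - g ω) ∂(P : Measure Ω)| ≤ (2 * M) * ((P : Measure Ω) G).toReal :=
        hnorm
      _ ≤ (2 * M) * (ε / (8 * M)) := by
        apply mul_le_mul_of_nonneg_left hPG (by positivity)
      _ = ε / 4 := by field_simp; ring
  -- continuity of the integral of `g`
  have hgcont : Continuous fun P : ProbabilityMeasure Ω => ∫ ω, g ω ∂(P : Measure Ω) :=
    ProbabilityMeasure.continuous_integral_boundedContinuousFunction g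
  have htend : Tendsto (fun P : ProbabilityMeasure Ω => ∫ ω, g ω ∂(P : Measure Ω))
      (nhdsWithin Q Ps) (nhds (∫ ω, g ω ∂(Q : Measure Ω))) :=
    (hgcont.tendsto Q).mono_left nhdsWithin_le_nhds
  have hev := Metric.tendsto_nhds.mp htend (ε / 4) (by positivity)
  filter_upwards [hev, self_mem_nhdsWithin] with P hPd hPmem
  have e1 := est P hPmem
  have e2 := est Q hQ
  rw [Real.dist_eq] at hPd ⊢
  have : |(∫ ω, f ω ∂(P : Measure Ω)) - ∫ ω, f ω ∂(Q : Measure Ω)| ≤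
      |(∫ ω, f ω ∂(P : Measure Ω)) - ∫ ω, g ω ∂(P : Measure Ω)| +
      |(∫ ω, g ω ∂(P : Measure Ω)) - ∫ ω, g ω ∂(Q : Measure Ω)| +
      |(∫ ω, g ω ∂(Q : Measure Ω)) - ∫ ω, f ω ∂(Q : Measure Ω)| := by
    have := abs_sub_le (∫ ω, f ω ∂(P : Measure Ω)) (∫ ω, g ω ∂(Q : Measure Ω))
      (∫ ω, f ω ∂(Q : Measure Ω))
    have h2 := abs_sub_le (∫ ω, f ω ∂(P : Measure Ω)) (∫ ω, g ω ∂(P : Measure Ω))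
      (∫ ω, g ω ∂(Q : Measure Ω))
    linarith
  have e3 : |(∫ ω, g ω ∂(Q : Measure Ω)) - ∫ ω, f ω ∂(Q : Measure Ω)| =
      |(∫ ω, f ω ∂(Q : Measure Ω)) - ∫ ω, g ω ∂(Q : Measure Ω)| := abs_sub_comm _ _
  linarith [e3 ▸ this]

end Aux

/-- Downward monotone convergence for an upper expectation: for a weakly compact family
`𝒫` of Borel probability measures, if the `X_n` are uniformly bounded, quasi-continuous,
and decrease pointwise to `X`, then `sup_{P∈𝒫} ∫ X_n dP` decreases to `sup_{P∈𝒫} ∫ X dP`. -/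
theorem downward_monotone_convergence_upper_expectation
    {Ω : Type*} [MetricSpace Ω] [MeasurableSpace Ω] [BorelSpace Ω]
    (Ps : Set (ProbabilityMeasure Ω)) (hne : Ps.Nonempty) (hcomp : IsCompact Ps)
    (M : ℝ) (hM : 0 < M) (X : ℕ → Ω → ℝ) (X₀ : Ω → ℝ)
    (hXmeas : ∀ n, Measurable (X n))
    (hXbound : ∀ n ω, |X n ω| ≤ M)
    (hqc : ∀ n, ∀ ε : ℝ, 0 < ε → ∃ G : Set Ω, IsOpen G ∧
      (⨆ P ∈ Ps, (P : Measure Ω) G) < ENNReal.ofReal ε ∧ ContinuousOn (X n) Gᶜ)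
    (hanti : ∀ ω, Antitone fun n => X n ω)
    (hconv : ∀ ω, Tendsto (fun n => X n ω) atTop (nhds (X₀ ω))) :
    (Antitone fun n => ⨆ P : Ps, ∫ ω, X n ω ∂(P : Measure Ω)) ∧
      Tendsto (fun n => ⨆ P : Ps, ∫ ω, X n ω ∂(P : Measure Ω)) atTop
        (nhds (⨆ P : Ps, ∫ ω, X₀ ω ∂(P : Measure Ω))) := by
  have : Nonempty Ps := hne.to_subtype
  -- basic facts about X₀
  have hX₀meas : Measurable X₀ :=
    measurable_of_tendsto_metrizable hXmeas (tendsto_pi_nhds.mpr hconv)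
  have hX₀bound : ∀ ω, |X₀ ω| ≤ M := fun ω =>
    le_of_tendsto' ((continuous_abs.tendsto _).comp (hconv ω)) (fun n => hXbound n ω)
  have hle₀ : ∀ n ω, X₀ ω ≤ X n ω := fun n ω =>
    le_of_tendsto (hconv ω) (eventually_atTop.2 ⟨n, fun m hm => hanti ω hm⟩)
  -- integrability
  have hint : ∀ n (P : ProbabilityMeasure Ω), Integrable (X n) (P : Measure Ω) :=
    fun n P => integrable_of_abs_le' (hXmeas n) (hXbound n)
  have hint₀ : ∀ P : ProbabilityMeasure Ω, Integrable X₀ (P : Measure Ω) :=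
    fun P => integrable_of_abs_le' hX₀meas hX₀bound
  set F : ℕ → ProbabilityMeasure Ω → ℝ := fun n P => ∫ ω, X n ω ∂(P : Measure Ω) with hF
  set F₀ : ProbabilityMeasure Ω → ℝ := fun P => ∫ ω, X₀ ω ∂(P : Measure Ω) with hF₀
  -- boundedness of ranges
  have hbddF : ∀ n, BddAbove (Set.range fun P : Ps => F n (P : ProbabilityMeasure Ω)) := by
    intro n
    refine ⟨M, ?_⟩
    rintro x ⟨P, rfl⟩
    exact (abs_le.mp (abs_integral_le' (hXbound n))).2
  have hbddF₀ : BddAbove (Set.range fun P : Ps => F₀ (P : ProbabilityMeasure Ω)) := by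
    refine ⟨M, ?_⟩
    rintro x ⟨P, rfl⟩
    exact (abs_le.mp (abs_integral_le' hX₀bound)).2
  -- monotonicity of F in n
  have hFanti : ∀ (P : ProbabilityMeasure Ω), Antitone fun n => F n P := by
    intro P m n hmn
    exact integral_mono (hint n P) (hint m P) (fun ω => hanti ω hmn)
  have hF₀le : ∀ n (P : ProbabilityMeasure Ω), F₀ P ≤ F n P := fun n P =>
    integral_mono (hint₀ P) (hint n P) (hle₀ n)
  -- the suprema
  set s : ℕ → ℝ := fun n => ⨆ P : Ps, F n (P : ProbabilityMeasure Ω) with hs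
  have hsanti : Antitone s := by
    intro m n hmn
    exact ciSup_mono (hbddF m) (fun P => hFanti _ hmn)
  refine ⟨hsanti, ?_⟩
  set s₀ : ℝ := ⨆ P : Ps, F₀ (P : ProbabilityMeasure Ω) with hs₀
  have hs₀le : ∀ n, s₀ ≤ s n := fun n =>
    ciSup_mono (hbddF n) (fun P => hF₀le n _)
  have hbddb : BddBelow (Set.range s) := by
    refine ⟨s₀, ?_⟩
    rintro x ⟨n, rfl⟩
    exact hs₀le n
  -- the limit L of s
  have htend : Tendsto s atTop (nhds (⨅ n, s n)) := tendsto_atTop_ciInf hsanti hbddb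
  set L : ℝ := ⨅ n, s n with hL
  have hs₀L : s₀ ≤ L := le_ciInf hs₀le
  -- reverse inequality via compactness
  have hLs₀ : L ≤ s₀ := by
    -- continuity of each F n on Ps
    have hcont : ∀ n, ContinuousOn (F n) Ps := fun n =>
      continuousOn_integral_of_qc Ps hM (hXmeas n) (hXbound n) (hqc n)
    -- maximizers
    choose P hPmem hPmax using fun n => hcomp.exists_isMaxOn hne (hcont n)
    have hsP : ∀ n, s n ≤ F n (P n) := fun n =>
      ciSup_le fun Q => hPmax n Q.2
    have hLP : ∀ n, L ≤ F n (P n) := fun n =>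
      le_trans (ciInf_le hbddb n) (hsP n)
    -- cluster point
    have hlePs : Filter.map P atTop ≤ Filter.principal Ps := by
      rw [Filter.le_principal_iff, Filter.mem_map]
      exact Filter.Eventually.of_forall hPmem
    obtain ⟨Q, hQmem, hQclus⟩ := hcomp.exists_clusterPt hlePs
    have hQmap : MapClusterPt Q atTop P := hQclus
    -- L ≤ F m Q for every m
    have hFQ : ∀ m, L ≤ F m Q := by
      intro m
      have hFc : Tendsto (F m) (nhdsWithin Q Ps) (nhds (F m Q)) := hcont m Q hQmem
      have hle2 : nhds Q ⊓ Filter.map P atTop ≤ nhdsWithin Q Ps := by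
        rw [nhdsWithin]
        exact le_inf inf_le_left (inf_le_right.trans hlePs)
      have hcl : MapClusterPt (F m Q) atTop (F m ∘ P) :=
        hQmap.tendsto_comp' (hFc.mono_left hle2)
      by_contra hlt
      push_neg at hlt
      have hopen : Set.Iio L ∈ nhds (F m Q) := isOpen_Iio.mem_nhds hlt
      have hfreq := mapClusterPt_iff_frequently.mp hcl _ hopen
      have hev : ∀ᶠ n in atTop, L ≤ (F m ∘ P) n := by
        refine eventually_atTop.2 ⟨m, fun n hn => ?_⟩
        exact le_trans (hLP n) (hFanti (P n) hn)
      obtain ⟨n, hn1, hn2⟩ := (hev.and_frequently hfreq).exists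
      exact absurd hn2 (not_lt.2 hn1)
    -- dominated convergence at Q
    have hdc : Tendsto (fun m => F m Q) atTop (nhds (F₀ Q)) := by
      apply tendsto_integral_of_dominated_convergence (fun _ => M)
      · exact fun n => (hXmeas n).aestronglyMeasurable
      · exact integrable_const M
      · exact fun n => ae_of_all _ fun ω => by
          simpa [Real.norm_eq_abs] using hXbound n ω
      · exact ae_of_all _ fun ω => hconv ω
    have hLF₀ : L ≤ F₀ Q := ge_of_tendsto' hdc hFQ
    exact le_trans hLF₀ (le_ciSup hbddF₀ (⟨Q, hQmem⟩ : Ps))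
  have : L = s₀ := le_antisymm hLs₀ hs₀L
  rw [← this]
  exact htend
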